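/- Let (Ω, μ) be a finite measure space and let u : [0, ∞) → L^{3/2}(μ) be differentiable on [0, ∞) with derivative u'. Assume that for every t ≥ 0 the function u(t) belongs to L³(μ), that t ↦ ‖u(t)‖_{L³(μ)}² is integrable on (0, ∞), and that t ↦ ‖u'(t)‖_{L^{3/2}(μ)}² is integrable on (0, ∞). Then ‖u(t)‖_{L^{3/2}(μ)} → 0 as t → +∞. -/

import Mathlib

open MeasureTheory Filter
open scoped ENNReal

set_option maxHeartbeats 1000000

instance : Fact ((1 : ℝ≥0∞) ≤ 3 / 2) := ⟨by
  rw [ENNReal.le_div_iff_mul_le (by norm_num) (by norm_num)]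
  norm_num⟩

/-- Tail windows of an integrable function tend to zero. -/
lemma tail_window_tendsto {h : ℝ → ℝ} (hi : IntegrableOn h (Set.Ioi 0)) :
    Tendsto (fun t => ∫ x in Set.Ioc (t - 1) t, h x) atTop (nhds 0) := by
  have hH : Tendsto (fun t : ℝ => ∫ x in (0:ℝ)..t, h x) atTop
      (nhds (∫ x in Set.Ioi (0:ℝ), h x)) :=
    intervalIntegral_tendsto_integral_Ioi 0 hi tendsto_id
  have hH' : Tendsto (fun t : ℝ => ∫ x in (0:ℝ)..(t - 1), h x) atTop
      (nhds (∫ x in Set.Ioi (0:ℝ), h x)) :=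
    hH.comp (tendsto_atTop_add_const_right atTop (-1) tendsto_id)
  have key : Tendsto (fun t : ℝ => (∫ x in (0:ℝ)..t, h x) - ∫ x in (0:ℝ)..(t-1), h x)
      atTop (nhds 0) := by
    simpa using hH.sub hH'
  refine key.congr' ?_
  filter_upwards [eventually_ge_atTop (1:ℝ)] with t ht
  have h1 : IntervalIntegrable h volume 0 (t - 1) := by
    rw [intervalIntegrable_iff_integrableOn_Ioc_of_le (by linarith)]
    exact hi.mono_set (Set.Ioc_subset_Ioi_self)
  have h2 : IntervalIntegrable h volume (t - 1) t := by
    rw [intervalIntegrable_iff_integrableOn_Ioc_of_le (by linarith)]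
    exact hi.mono_set fun x hx => lt_of_lt_of_le (show (0:ℝ) < x by linarith [hx.1]) le_rfl
  have := intervalIntegral.integral_add_adjacent_intervals h1 h2
  rw [← intervalIntegral.integral_of_le (show t - 1 ≤ t by linarith)]
  linarith [this]

/-- Let `(Ω, μ)` be a finite measure space and let `u : [0,∞) → L^{3/2}(μ)` be
differentiable with derivative `u'`. If `u(t) ∈ L³(μ)` for every `t ≥ 0`, with
`t ↦ ‖u(t)‖_{L³}²` integrable on `(0,∞)`, and `t ↦ ‖u'(t)‖_{L^{3/2}}²` is
integrable on `(0,∞)`, then `‖u(t)‖_{L^{3/2}} → 0` as `t → +∞`. -/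
theorem velocity_tendsto_zero {Ω : Type*} [MeasurableSpace Ω] (μ : Measure Ω)
    [IsFiniteMeasure μ]
    (u u' : ℝ → Lp ℝ (3 / 2 : ℝ≥0∞) μ)
    (hderiv : ∀ t ∈ Set.Ici (0 : ℝ), HasDerivAt u (u' t) t)
    (hmem : ∀ t : ℝ, 0 ≤ t → MemLp (u t : Ω → ℝ) 3 μ)
    (hu3 : IntegrableOn
      (fun t => (eLpNorm (u t : Ω → ℝ) 3 μ).toReal ^ 2) (Set.Ioi (0 : ℝ)))
    (hu' : IntegrableOn (fun t => ‖u' t‖ ^ 2) (Set.Ioi (0 : ℝ))) :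
    Tendsto (fun t => ‖u t‖) atTop (nhds 0) := by
  set f : ℝ → ℝ := fun t => ‖u t‖ with hf_def
  set g : ℝ → ℝ := fun t => ‖u' t‖ with hg_def
  -- continuity of u and f on Ici 0
  have hcontu : ContinuousOn u (Set.Ici 0) := fun t ht =>
    (hderiv t ht).continuousAt.continuousWithinAt
  have hcontf : ContinuousOn f (Set.Ici 0) := hcontu.norm
  -- Step A: f² integrable on Ioi 0
  have hC : (0:ℝ≥0∞) ≤ μ Set.univ := zero_le
  set C : ℝ := (μ Set.univ ^ (1 / (3/2 : ℝ≥0∞).toReal - 1 / (3 : ℝ≥0∞).toReal)).toReal with hC_def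
  have hCfin : μ Set.univ ^ (1 / (3/2 : ℝ≥0∞).toReal - 1 / (3 : ℝ≥0∞).toReal) ≠ ∞ := by
    apply (ENNReal.rpow_lt_top_of_nonneg ?_ (measure_ne_top μ _)).ne
    norm_num [ENNReal.toReal_div]
  have hfC : ∀ t : ℝ, 0 ≤ t → f t ≤ (eLpNorm (u t : Ω → ℝ) 3 μ).toReal * C := by
    intro t ht
    have h1 : eLpNorm (u t : Ω → ℝ) (3/2) μ ≤ eLpNorm (u t : Ω → ℝ) 3 μ *
        μ Set.univ ^ (1 / (3/2 : ℝ≥0∞).toReal - 1 / (3 : ℝ≥0∞).toReal) :=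
      eLpNorm_le_eLpNorm_mul_rpow_measure_univ (by
        rw [ENNReal.div_le_iff (by norm_num) (by norm_num)]; norm_num)
        (Lp.aestronglyMeasurable (u t))
    have h2 : eLpNorm (u t : Ω → ℝ) 3 μ ≠ ∞ := (hmem t ht).2.ne
    calc f t = (eLpNorm (u t : Ω → ℝ) (3/2) μ).toReal := Lp.norm_def (u t)
    _ ≤ ((eLpNorm (u t : Ω → ℝ) 3 μ) *
        μ Set.univ ^ (1 / (3/2 : ℝ≥0∞).toReal - 1 / (3 : ℝ≥0∞).toReal)).toReal :=
      ENNReal.toReal_mono (ENNReal.mul_ne_top h2 hCfin) h1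
    _ = (eLpNorm (u t : Ω → ℝ) 3 μ).toReal * C := ENNReal.toReal_mul
  have hf2int : IntegrableOn (fun t => f t ^ 2) (Set.Ioi (0:ℝ)) := by
    refine Integrable.mono' (hu3.mul_const (C ^ 2)) ?_ ?_
    · exact ((hcontf.mono Set.Ioi_subset_Ici_self).pow 2).aestronglyMeasurable
        measurableSet_Ioi
    · filter_upwards [self_mem_ae_restrict measurableSet_Ioi] with t ht
      have h1 := hfC t (le_of_lt ht)
      have h0 : (0:ℝ) ≤ f t := norm_nonneg _
      rw [Real.norm_eq_abs, abs_of_nonneg (by positivity)]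
      calc f t ^ 2 ≤ ((eLpNorm (u t : Ω → ℝ) 3 μ).toReal * C) ^ 2 := by
            apply pow_le_pow_left₀ h0 h1
      _ = (eLpNorm (u t : Ω → ℝ) 3 μ).toReal ^ 2 * C ^ 2 := by ring
  -- measurability of u' on positive parts
  have hmeas_u' : ∀ s : Set ℝ, MeasurableSet s → s ⊆ Set.Ioi 0 →
      AEStronglyMeasurable u' (volume.restrict s) := by
    intro s hs hsub
    refine (stronglyMeasurable_deriv u).aestronglyMeasurable.congr ?_
    refine ((ae_restrict_iff' hs).2 (ae_of_all _ fun x hx => ?_))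
    exact (hderiv x (Set.mem_Ici.2 (le_of_lt (hsub hx)))).deriv
  -- the window limits
  have hF := tail_window_tendsto hf2int
  have hG := tail_window_tendsto hu'
  have hB : Tendsto (fun t => 2 * (∫ x in Set.Ioc (t-1) t, f x ^ 2) +
      2 * (∫ x in Set.Ioc (t-1) t, g x ^ 2)) atTop (nhds 0) := by
    have := (hF.const_mul 2).add (hG.const_mul 2)
    simpa using this
  -- key pointwise bound for t ≥ 2
  have hkey : ∀ᶠ t in atTop, f t ^ 2 ≤ 2 * (∫ x in Set.Ioc (t-1) t, f x ^ 2) +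
      2 * (∫ x in Set.Ioc (t-1) t, g x ^ 2) := by
    filter_upwards [eventually_ge_atTop (2:ℝ)] with t ht
    have ht1 : (1:ℝ) ≤ t - 1 := by linarith
    have hsubI : Set.Ioc (t-1) t ⊆ Set.Ioi (0:ℝ) := fun x hx => by
      simp only [Set.mem_Ioi]; linarith [hx.1]
    have hvol : volume (Set.Ioc (t-1) t) = 1 := by
      rw [Real.volume_Ioc]; norm_num
    -- integrabilities on the window
    have hg2w : IntegrableOn (fun x => g x ^ 2) (Set.Ioc (t-1) t) := hu'.mono_set hsubI
    have hf2w : IntegrableOn (fun x => f x ^ 2) (Set.Ioc (t-1) t) := hf2int.mono_set hsubI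
    have hconst1 : IntegrableOn (fun _ : ℝ => (1:ℝ)) (Set.Ioc (t-1) t) :=
      integrableOn_const (by rw [hvol]; exact ENNReal.one_ne_top)
    have hbnd : Integrable (fun x => ‖u' x‖ ^ 2 + 1)
        (volume.restrict (Set.Ioc (t-1) t)) := hg2w.add hconst1
    have hgw : IntegrableOn g (Set.Ioc (t-1) t) := by
      refine Integrable.mono' hbnd ((hmeas_u' _ measurableSet_Ioc hsubI).norm) ?_
      refine ae_of_all _ fun x => ?_
      rw [Real.norm_eq_abs, abs_of_nonneg (norm_nonneg _)]
      have h0 : (0:ℝ) ≤ g x := norm_nonneg _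
      nlinarith [sq_nonneg (g x - 1)]
    -- minimum point of f² on [t-1, t]
    obtain ⟨s, hs, hmin⟩ := isCompact_Icc.exists_isMinOn
      (Set.nonempty_Icc.2 (by linarith : t - 1 ≤ t))
      (((hcontf.mono (fun x hx => le_trans (by linarith) hx.1 : Set.Icc (t-1) t ⊆ Set.Ici 0)).pow 2))
    have hs0 : (0:ℝ) < s := lt_of_lt_of_le (by linarith) hs.1
    -- f s ^ 2 ≤ ∫ f²
    have hfs : f s ^ 2 ≤ ∫ x in Set.Ioc (t-1) t, f x ^ 2 := by
      have : ∫ _ in Set.Ioc (t-1) t, f s ^ 2 ≤ ∫ x in Set.Ioc (t-1) t, f x ^ 2 := by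
        refine setIntegral_mono_on (integrableOn_const (by
          rw [hvol]; exact ENNReal.one_ne_top)) hf2w measurableSet_Ioc fun x hx => ?_
        exact hmin (Set.Ioc_subset_Icc_self hx)
      rwa [setIntegral_const, measureReal_def, hvol, ENNReal.toReal_one, one_smul] at this
    -- FTC: u t - u s = ∫ u'
    have hs_le_t : s ≤ t := hs.2
    have hint_u' : IntervalIntegrable u' volume s t := by
      rw [intervalIntegrable_iff_integrableOn_Ioc_of_le hs_le_t]
      have hsub2 : Set.Ioc s t ⊆ Set.Ioi (0:ℝ) := fun x hx => lt_trans hs0 hx.1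
      have hconst2 : IntegrableOn (fun _ : ℝ => (1:ℝ)) (Set.Ioc s t) :=
        integrableOn_const (by rw [Real.volume_Ioc]; exact ENNReal.ofReal_ne_top)
      have hbnd2 : Integrable (fun x => ‖u' x‖ ^ 2 + 1)
          (volume.restrict (Set.Ioc s t)) := (hu'.mono_set hsub2).add hconst2
      refine Integrable.mono' hbnd2 (hmeas_u' _ measurableSet_Ioc hsub2) ?_
      refine ae_of_all _ fun x => ?_
      have h0 : (0:ℝ) ≤ g x := norm_nonneg _
      nlinarith [sq_nonneg (g x - 1)]
    have hftc : ∫ r in s..t, u' r = u t - u s := by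
      refine intervalIntegral.integral_eq_sub_of_hasDerivAt (fun x hx => ?_) hint_u'
      rw [Set.uIcc_of_le hs_le_t] at hx
      exact hderiv x (Set.mem_Ici.2 (le_of_lt (lt_of_lt_of_le (by linarith) hx.1)))
    -- I := ∫ g over window
    set I : ℝ := ∫ x in Set.Ioc (t-1) t, g x with hI_def
    have hnorm_sub : ‖u t - u s‖ ≤ I := by
      rw [← hftc]
      calc ‖∫ r in s..t, u' r‖ ≤ ∫ r in s..t, ‖u' r‖ :=
        intervalIntegral.norm_integral_le_integral_norm hs_le_t
      _ = ∫ r in Set.Ioc s t, g r := intervalIntegral.integral_of_le hs_le_t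
      _ ≤ I := by
          refine setIntegral_mono_set hgw (ae_of_all _ fun x => norm_nonneg _) ?_
          exact HasSubset.Subset.eventuallyLE (fun x hx => ⟨lt_of_le_of_lt (by linarith [hs.1]) hx.1, hx.2⟩)
    -- Cauchy–Schwarz via variance
    haveI hprob : IsProbabilityMeasure (volume.restrict (Set.Ioc (t-1) t)) := by
      constructor
      rw [Measure.restrict_apply_univ, hvol]
    have hmem2 : MemLp g 2 (volume.restrict (Set.Ioc (t-1) t)) := by
      refine (memLp_two_iff_integrable_sq hgw.aestronglyMeasurable).2 ?_
      exact hg2w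
    have hvar := ProbabilityTheory.variance_nonneg g (volume.restrict (Set.Ioc (t-1) t))
    rw [ProbabilityTheory.variance_eq_sub hmem2] at hvar
    have hCS : I ^ 2 ≤ ∫ x in Set.Ioc (t-1) t, g x ^ 2 := by
      have : (∫ x in Set.Ioc (t-1) t, g x) ^ 2 ≤
          ∫ x in Set.Ioc (t-1) t, (g ^ 2) x := by linarith [hvar]
      simpa [hI_def] using this
    -- combine
    have htri : f t ≤ f s + I := by
      calc f t = ‖u s + (u t - u s)‖ := by rw [add_sub_cancel]
      _ ≤ ‖u s‖ + ‖u t - u s‖ := norm_add_le _ _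
      _ ≤ f s + I := add_le_add le_rfl hnorm_sub
    have hI0 : 0 ≤ I := le_trans (norm_nonneg _) hnorm_sub
    have hfs0 : (0:ℝ) ≤ f s := norm_nonneg _
    have hft0 : (0:ℝ) ≤ f t := norm_nonneg _
    nlinarith [sq_nonneg (f s - I)]
  -- squeeze
  have hsq : Tendsto (fun t => f t ^ 2) atTop (nhds 0) :=
    squeeze_zero' (Eventually.of_forall fun t => sq_nonneg _) hkey hB
  have : Tendsto (fun t => Real.sqrt (f t ^ 2)) atTop (nhds 0) := by
    have := (Real.continuous_sqrt.tendsto 0).comp hsq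
    simpa [Function.comp_def] using this
  refine this.congr fun t => ?_
  rw [Real.sqrt_sq (norm_nonneg _)]
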